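/- Let Z_1, …, Z_b be mutually independent random variables and f_1, …, f_b deterministic functions on their respective ranges. For any a ≤ b, letting A_a denote the collection of all subsets of [b] of size a, we have min_{A ∈ A_a} H(f_A(Z_A)) ≤ (a/b) · H(f_{[b]}(Z_{[b]})). -/

import Mathlib

open Finset

open scoped Classical in
/-- Probability that the random variable `X` takes the value `s`, under the
probability mass function `p` on the finite sample space `Ω`. -/
noncomputable def prEq {Ω : Type*} [Fintype Ω] {S : Type*} (p : Ω → ℝ) (X : Ω → S) (s : S) : ℝ :=
  ∑ ω, if X ω = s then p ω else 0

/-- Shannon entropy `H(X)` of the random variable `X` under the pmf `p`. -/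
noncomputable def entropy {Ω : Type*} [Fintype Ω] {S : Type*} (p : Ω → ℝ) (X : Ω → S) : ℝ :=
  -∑ ω, p ω * Real.log (prEq p X (X ω))

/-- Conditional entropy `H(X | Y) = H(X, Y) - H(Y)`. -/
noncomputable def condEntropy {Ω : Type*} [Fintype Ω] {S T : Type*}
    (p : Ω → ℝ) (X : Ω → S) (Y : Ω → T) : ℝ :=
  entropy p (fun ω => (X ω, Y ω)) - entropy p Y

/-- Conditional mutual information `I(X ; Y | Z) = H(X|Z) + H(Y|Z) - H(X,Y|Z)`. -/
noncomputable def condMI {Ω : Type*} [Fintype Ω] {S T U : Type*}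
    (p : Ω → ℝ) (X : Ω → S) (Y : Ω → T) (Z : Ω → U) : ℝ :=
  condEntropy p X Z + condEntropy p Y Z - condEntropy p (fun ω => (X ω, Y ω)) Z

/-- The tuple of random variables `(Z i)_{i ∈ A}`, as a single random variable. -/
def tupleOn {Ω : Type*} {ι : Type*} {S : ι → Type*}
    (Z : (i : ι) → Ω → S i) (A : Finset ι) (ω : Ω) :
    ∀ i : {x : ι // x ∈ A}, S i.1 := fun i => Z i.1 ω

section helpers
open scoped Classical

variable {Ω : Type*} [Fintype Ω] {p : Ω → ℝ}

lemma prEq_nonneg (hp0 : ∀ ω, 0 ≤ p ω) {S : Type*} (X : Ω → S) (s : S) :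
    0 ≤ prEq p X s := by
  apply Finset.sum_nonneg
  intro ω _
  split <;> simp [hp0 ω]

lemma le_prEq_self (hp0 : ∀ ω, 0 ≤ p ω) {S : Type*} (X : Ω → S) (ω : Ω) :
    p ω ≤ prEq p X (X ω) := by
  have := Finset.single_le_sum (f := fun ω' => if X ω' = X ω then p ω' else 0)
    (fun ω' _ => by split <;> simp [hp0 ω']) (Finset.mem_univ ω)
  simpa [prEq] using this

lemma sum_group {S : Type*} (p : Ω → ℝ) (X : Ω → S) (F : S → ℝ) :
    ∑ s ∈ Finset.image X Finset.univ, prEq p X s * F s = ∑ ω, p ω * F (X ω) := by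
  unfold prEq
  simp_rw [Finset.sum_mul, ite_mul, zero_mul]
  rw [Finset.sum_comm]
  refine Finset.sum_congr rfl fun ω _ => ?_
  rw [Finset.sum_ite_eq (Finset.image X Finset.univ) (X ω) (fun s => p ω * F s)]
  simp

lemma sum_prEq (p : Ω → ℝ) {S : Type*} (X : Ω → S) :
    ∑ s ∈ Finset.image X Finset.univ, prEq p X s = ∑ ω, p ω := by
  have := sum_group p X (fun _ => 1)
  simpa using this

lemma prEq_marginal_fst {S T : Type*} (p : Ω → ℝ) (X : Ω → S) (Y : Ω → T) (y : T) :
    ∑ x ∈ Finset.image X Finset.univ, prEq p (fun ω => (X ω, Y ω)) (x, y) = prEq p Y y := by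
  unfold prEq
  rw [Finset.sum_comm]
  refine Finset.sum_congr rfl fun ω _ => ?_
  simp_rw [Prod.mk.injEq, ite_and]
  rw [Finset.sum_ite_eq (Finset.image X Finset.univ) (X ω)
    (fun _ => if Y ω = y then p ω else 0)]
  simp

lemma prEq_pair_le_fst (hp0 : ∀ ω, 0 ≤ p ω) {S T : Type*} (X : Ω → S) (Y : Ω → T) (x : S) (y : T) :
    prEq p (fun ω => (X ω, Y ω)) (x, y) ≤ prEq p X x := by
  apply Finset.sum_le_sum
  intro ω _
  split_ifs with h1 h2
  · exact le_rfl
  · exact absurd (congrArg Prod.fst h1) h2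
  · exact hp0 ω
  · exact le_rfl

lemma prEq_pair_le_snd (hp0 : ∀ ω, 0 ≤ p ω) {S T : Type*} (X : Ω → S) (Y : Ω → T) (x : S) (y : T) :
    prEq p (fun ω => (X ω, Y ω)) (x, y) ≤ prEq p Y y := by
  apply Finset.sum_le_sum
  intro ω _
  split_ifs with h1 h2
  · exact le_rfl
  · exact absurd (congrArg Prod.snd h1) h2
  · exact hp0 ω
  · exact le_rfl

end helpers
section helpers2
open scoped Classical
open Finset

variable {Ω : Type*} [Fintype Ω] {p : Ω → ℝ}

lemma gibbs (hp0 : ∀ ω, 0 ≤ p ω) (hp1 : ∑ ω, p ω = 1) {S : Type*} (X : Ω → S) (q : S → ℝ)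
    (hq0 : ∀ s, 0 ≤ q s)
    (hqpos : ∀ ω, 0 < p ω → 0 < q (X ω))
    (hqsum : ∑ s ∈ Finset.image X Finset.univ, q s ≤ 1) :
    entropy p X ≤ -∑ ω, p ω * Real.log (q (X ω)) := by
  unfold entropy
  rw [← sum_group p X (fun s => Real.log (prEq p X s)),
      ← sum_group p X (fun s => Real.log (q s))]
  have key : ∀ s ∈ Finset.image X Finset.univ,
      prEq p X s * Real.log (q s) - prEq p X s * Real.log (prEq p X s)
        ≤ q s - prEq p X s := by
    intro s hs
    rcases eq_or_lt_of_le (prEq_nonneg hp0 X s) with h | h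
    · simp [← h, hq0 s]
    · have hqs : 0 < q s := by
        obtain ⟨ω, _, hne⟩ := Finset.exists_ne_zero_of_sum_ne_zero
          (by rw [show (∑ ω, if X ω = s then p ω else 0) = prEq p X s from rfl]; exact ne_of_gt h)
        by_cases hx : X ω = s
        · rw [← hx]
          apply hqpos
          rcases (hp0 ω).lt_or_eq with h' | h'
          · exact h'
          · exact absurd (by simp [hx, ← h']) hne
        · exact absurd (by simp [hx]) hne
      have h1 : Real.log (q s) - Real.log (prEq p X s) = Real.log (q s / prEq p X s) :=
        (Real.log_div (ne_of_gt hqs) (ne_of_gt h)).symm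
      have h2 : Real.log (q s / prEq p X s) ≤ q s / prEq p X s - 1 :=
        Real.log_le_sub_one_of_pos (div_pos hqs h)
      have h3 := mul_le_mul_of_nonneg_left h2 (le_of_lt h)
      calc prEq p X s * Real.log (q s) - prEq p X s * Real.log (prEq p X s)
          = prEq p X s * Real.log (q s / prEq p X s) := by rw [← h1]; ring
        _ ≤ prEq p X s * (q s / prEq p X s - 1) := h3
        _ = q s - prEq p X s := by field_simp
  have h4 := Finset.sum_le_sum key
  rw [Finset.sum_sub_distrib, Finset.sum_sub_distrib] at h4
  have h5 : ∑ s ∈ Finset.image X Finset.univ, prEq p X s = 1 := by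
    rw [sum_prEq p X, hp1]
  rw [h5] at h4
  linarith

lemma entropy_comp_le (hp0 : ∀ ω, 0 ≤ p ω) {S T : Type*} (X : Ω → S) (g : S → T) :
    entropy p (fun ω => g (X ω)) ≤ entropy p X := by
  unfold entropy
  apply neg_le_neg
  apply Finset.sum_le_sum
  intro ω _
  rcases (hp0 ω).lt_or_eq with h | h
  · apply mul_le_mul_of_nonneg_left _ (le_of_lt h)
    apply Real.log_le_log (lt_of_lt_of_le h (le_prEq_self hp0 X ω))
    apply Finset.sum_le_sum
    intro ω' _
    split_ifs with h1 h2
    · exact le_rfl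
    · exact absurd (congrArg g h1) h2
    · exact hp0 ω'
    · exact le_rfl
  · simp [← h]

lemma entropy_relabel (hp0 : ∀ ω, 0 ≤ p ω) {S T : Type*} {X : Ω → S} {Y : Ω → T}
    (g : S → T) (h : T → S) (hg : ∀ ω, g (X ω) = Y ω) (hh : ∀ ω, h (Y ω) = X ω) :
    entropy p X = entropy p Y := by
  apply le_antisymm
  · have := entropy_comp_le hp0 Y h
    rwa [show (fun ω => h (Y ω)) = X from funext hh] at this
  · have := entropy_comp_le hp0 X g
    rwa [show (fun ω => g (X ω)) = Y from funext hg] at this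

lemma entropy_swap (hp0 : ∀ ω, 0 ≤ p ω) {S T : Type*} (X : Ω → S) (Y : Ω → T) :
    entropy p (fun ω => (X ω, Y ω)) = entropy p (fun ω => (Y ω, X ω)) :=
  entropy_relabel hp0 Prod.swap Prod.swap (fun _ => rfl) (fun _ => rfl)

lemma pairprob_sum_le_one (hp0 : ∀ ω, 0 ≤ p ω) (hp1 : ∑ ω, p ω = 1) {S T : Type*}
    [DecidableEq (S × T)] (X : Ω → S) (Y : Ω → T) :
    ∑ v ∈ Finset.image (fun ω => (X ω, Y ω)) Finset.univ, prEq p X v.1 * prEq p Y v.2 ≤ 1 := by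
  calc ∑ v ∈ Finset.image (fun ω => (X ω, Y ω)) Finset.univ, prEq p X v.1 * prEq p Y v.2
      ≤ ∑ v ∈ (Finset.image X Finset.univ) ×ˢ (Finset.image Y Finset.univ),
          prEq p X v.1 * prEq p Y v.2 := by
        apply Finset.sum_le_sum_of_subset_of_nonneg
        · intro v hv
          obtain ⟨ω, _, rfl⟩ := Finset.mem_image.mp hv
          exact Finset.mem_product.mpr ⟨Finset.mem_image_of_mem X (Finset.mem_univ ω),
            Finset.mem_image_of_mem Y (Finset.mem_univ ω)⟩
        · intro v _ _
          exact mul_nonneg (prEq_nonneg hp0 X v.1) (prEq_nonneg hp0 Y v.2)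
    _ = (∑ x ∈ Finset.image X Finset.univ, prEq p X x)
          * (∑ y ∈ Finset.image Y Finset.univ, prEq p Y y) := by
        rw [Finset.sum_product, Finset.sum_mul]
        exact Finset.sum_congr rfl fun x _ => by rw [Finset.mul_sum]
    _ ≤ 1 := by rw [sum_prEq p X, sum_prEq p Y, hp1]; norm_num

lemma entropy_pair_le (hp0 : ∀ ω, 0 ≤ p ω) (hp1 : ∑ ω, p ω = 1) {S T : Type*}
    (X : Ω → S) (Y : Ω → T) :
    entropy p (fun ω => (X ω, Y ω)) ≤ entropy p X + entropy p Y := by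
  have G := gibbs hp0 hp1 (fun ω => (X ω, Y ω)) (fun v => prEq p X v.1 * prEq p Y v.2)
    (fun v => mul_nonneg (prEq_nonneg hp0 X v.1) (prEq_nonneg hp0 Y v.2))
    (fun ω hω => mul_pos (lt_of_lt_of_le hω (le_prEq_self hp0 X ω))
      (lt_of_lt_of_le hω (le_prEq_self hp0 Y ω)))
    ?_
  · refine le_trans G (le_of_eq ?_)
    have hpt : ∀ ω, p ω * Real.log (prEq p X (X ω) * prEq p Y (Y ω))
        = p ω * Real.log (prEq p X (X ω)) + p ω * Real.log (prEq p Y (Y ω)) := by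
      intro ω
      rcases (hp0 ω).lt_or_eq with h | h
      · rw [Real.log_mul (ne_of_gt (lt_of_lt_of_le h (le_prEq_self hp0 X ω)))
          (ne_of_gt (lt_of_lt_of_le h (le_prEq_self hp0 Y ω)))]
        ring
      · rw [← h]; ring
    rw [show (∑ ω, p ω * Real.log (prEq p X (X ω) * prEq p Y (Y ω)))
        = ∑ ω, (p ω * Real.log (prEq p X (X ω)) + p ω * Real.log (prEq p Y (Y ω)))
        from Finset.sum_congr rfl (fun ω _ => hpt ω), Finset.sum_add_distrib]
    unfold entropy
    ring
  · exact @pairprob_sum_le_one _ _ _ hp0 hp1 _ _ (fun a b => Classical.propDecidable (a = b)) X Y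

end helpers2
section helpers3
open scoped Classical
open Finset

variable {Ω : Type*} [Fintype Ω] {p : Ω → ℝ}

lemma tripleprob_sum_le_one (hp0 : ∀ ω, 0 ≤ p ω) (hp1 : ∑ ω, p ω = 1)
    {S T U : Type*} [DecidableEq ((S × T) × U)] (X : Ω → S) (Y : Ω → T) (C : Ω → U) :
    ∑ v ∈ Finset.image (fun ω => ((X ω, Y ω), C ω)) Finset.univ,
      prEq p (fun ω => (X ω, C ω)) (v.1.1, v.2) * prEq p (fun ω => (Y ω, C ω)) (v.1.2, v.2)
        / prEq p C v.2 ≤ 1 := by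
  have qnn : ∀ v : (S × T) × U, 0 ≤ prEq p (fun ω => (X ω, C ω)) (v.1.1, v.2)
      * prEq p (fun ω => (Y ω, C ω)) (v.1.2, v.2) / prEq p C v.2 := fun v =>
    div_nonneg (mul_nonneg (prEq_nonneg hp0 _ _) (prEq_nonneg hp0 _ _)) (prEq_nonneg hp0 _ _)
  calc ∑ v ∈ Finset.image (fun ω => ((X ω, Y ω), C ω)) Finset.univ,
      prEq p (fun ω => (X ω, C ω)) (v.1.1, v.2) * prEq p (fun ω => (Y ω, C ω)) (v.1.2, v.2)
        / prEq p C v.2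
      ≤ ∑ v ∈ (Finset.image (fun ω => (X ω, Y ω)) Finset.univ) ×ˢ (Finset.image C Finset.univ),
          prEq p (fun ω => (X ω, C ω)) (v.1.1, v.2) * prEq p (fun ω => (Y ω, C ω)) (v.1.2, v.2)
            / prEq p C v.2 := by
        apply Finset.sum_le_sum_of_subset_of_nonneg
        · intro v hv
          obtain ⟨ω, _, rfl⟩ := Finset.mem_image.mp hv
          exact Finset.mem_product.mpr ⟨Finset.mem_image_of_mem _ (Finset.mem_univ ω),
            Finset.mem_image_of_mem C (Finset.mem_univ ω)⟩
        · intro v _ _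
          exact qnn v
    _ ≤ ∑ c ∈ Finset.image C Finset.univ, prEq p C c := by
        rw [Finset.sum_product]
        rw [Finset.sum_comm]
        apply Finset.sum_le_sum
        intro c _
        dsimp only
        have hnum : ∑ v ∈ Finset.image (fun ω => (X ω, Y ω)) Finset.univ,
            prEq p (fun ω => (X ω, C ω)) (v.1, c) * prEq p (fun ω => (Y ω, C ω)) (v.2, c)
            ≤ prEq p C c * prEq p C c := by
          calc ∑ v ∈ Finset.image (fun ω => (X ω, Y ω)) Finset.univ,
              prEq p (fun ω => (X ω, C ω)) (v.1, c) * prEq p (fun ω => (Y ω, C ω)) (v.2, c)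
              ≤ ∑ v ∈ (Finset.image X Finset.univ) ×ˢ (Finset.image Y Finset.univ),
                  prEq p (fun ω => (X ω, C ω)) (v.1, c) * prEq p (fun ω => (Y ω, C ω)) (v.2, c) := by
                apply Finset.sum_le_sum_of_subset_of_nonneg
                · intro v hv
                  obtain ⟨ω, _, rfl⟩ := Finset.mem_image.mp hv
                  exact Finset.mem_product.mpr ⟨Finset.mem_image_of_mem X (Finset.mem_univ ω),
                    Finset.mem_image_of_mem Y (Finset.mem_univ ω)⟩
                · intro v _ _
                  exact mul_nonneg (prEq_nonneg hp0 _ _) (prEq_nonneg hp0 _ _)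
            _ = (∑ x ∈ Finset.image X Finset.univ, prEq p (fun ω => (X ω, C ω)) (x, c))
                  * (∑ y ∈ Finset.image Y Finset.univ, prEq p (fun ω => (Y ω, C ω)) (y, c)) := by
                rw [Finset.sum_product, Finset.sum_mul]
                exact Finset.sum_congr rfl fun x _ => by rw [Finset.mul_sum]
            _ = prEq p C c * prEq p C c := by
                rw [prEq_marginal_fst p X C c, prEq_marginal_fst p Y C c]
        have hnn : (0:ℝ) ≤ ∑ v ∈ Finset.image (fun ω => (X ω, Y ω)) Finset.univ,
            prEq p (fun ω => (X ω, C ω)) (v.1, c) * prEq p (fun ω => (Y ω, C ω)) (v.2, c) :=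
          Finset.sum_nonneg fun v _ => mul_nonneg (prEq_nonneg hp0 _ _) (prEq_nonneg hp0 _ _)
        rw [← Finset.sum_div]
        rcases eq_or_lt_of_le (prEq_nonneg hp0 C c) with h | h
        · rw [← h, div_zero]
        · rw [div_le_iff₀ h]
          calc _ ≤ prEq p C c * prEq p C c := hnum
            _ = prEq p C c * prEq p C c := rfl
    _ = 1 := by rw [sum_prEq p C, hp1]

lemma entropy_triple_le (hp0 : ∀ ω, 0 ≤ p ω) (hp1 : ∑ ω, p ω = 1)
    {S T U : Type*} (X : Ω → S) (Y : Ω → T) (C : Ω → U) :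
    entropy p (fun ω => ((X ω, Y ω), C ω)) + entropy p C
      ≤ entropy p (fun ω => (X ω, C ω)) + entropy p (fun ω => (Y ω, C ω)) := by
  have hXC : ∀ ω, 0 < p ω → 0 < prEq p (fun ω => (X ω, C ω)) (X ω, C ω) :=
    fun ω h => lt_of_lt_of_le h (le_prEq_self hp0 _ ω)
  have hYC : ∀ ω, 0 < p ω → 0 < prEq p (fun ω => (Y ω, C ω)) (Y ω, C ω) :=
    fun ω h => lt_of_lt_of_le h (le_prEq_self hp0 _ ω)
  have hC : ∀ ω, 0 < p ω → 0 < prEq p C (C ω) :=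
    fun ω h => lt_of_lt_of_le h (le_prEq_self hp0 _ ω)
  have G := gibbs hp0 hp1 (fun ω => ((X ω, Y ω), C ω))
    (fun v => prEq p (fun ω => (X ω, C ω)) (v.1.1, v.2)
        * prEq p (fun ω => (Y ω, C ω)) (v.1.2, v.2) / prEq p C v.2)
    (fun v => div_nonneg (mul_nonneg (prEq_nonneg hp0 _ _) (prEq_nonneg hp0 _ _))
        (prEq_nonneg hp0 _ _))
    (fun ω h => div_pos (mul_pos (hXC ω h) (hYC ω h)) (hC ω h))
    (@tripleprob_sum_le_one _ _ _ hp0 hp1 _ _ _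
      (fun a b => Classical.propDecidable (a = b)) X Y C)
  have hpt : ∀ ω, p ω * Real.log (prEq p (fun ω => (X ω, C ω)) (X ω, C ω)
        * prEq p (fun ω => (Y ω, C ω)) (Y ω, C ω) / prEq p C (C ω))
      = p ω * Real.log (prEq p (fun ω => (X ω, C ω)) (X ω, C ω))
        + p ω * Real.log (prEq p (fun ω => (Y ω, C ω)) (Y ω, C ω))
        - p ω * Real.log (prEq p C (C ω)) := by
    intro ω
    rcases (hp0 ω).lt_or_eq with h | h
    · rw [Real.log_div (ne_of_gt (mul_pos (hXC ω h) (hYC ω h))) (ne_of_gt (hC ω h)),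
        Real.log_mul (ne_of_gt (hXC ω h)) (ne_of_gt (hYC ω h))]
      ring
    · rw [← h]; ring
  have hsum : (∑ ω, p ω * Real.log (prEq p (fun ω => (X ω, C ω)) (X ω, C ω)
        * prEq p (fun ω => (Y ω, C ω)) (Y ω, C ω) / prEq p C (C ω)))
      = (∑ ω, p ω * Real.log (prEq p (fun ω => (X ω, C ω)) (X ω, C ω)))
        + (∑ ω, p ω * Real.log (prEq p (fun ω => (Y ω, C ω)) (Y ω, C ω)))
        - (∑ ω, p ω * Real.log (prEq p C (C ω))) := by
    rw [← Finset.sum_add_distrib, ← Finset.sum_sub_distrib]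
    exact Finset.sum_congr rfl fun ω _ => hpt ω
  have G2 : entropy p (fun ω => ((X ω, Y ω), C ω))
      ≤ entropy p (fun ω => (X ω, C ω)) + entropy p (fun ω => (Y ω, C ω)) - entropy p C := by
    refine le_trans G (le_of_eq ?_)
    unfold entropy
    rw [hsum]
    ring
  linarith

lemma dpi (hp0 : ∀ ω, 0 ≤ p ω) (hp1 : ∑ ω, p ω = 1) {S T V : Type*}
    (X : Ω → S) (Y : Ω → T) (g : S → V) :
    entropy p (fun ω => g (X ω)) + entropy p (fun ω => (X ω, Y ω))
      ≤ entropy p X + entropy p (fun ω => (g (X ω), Y ω)) := by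
  have M := entropy_triple_le hp0 hp1 X Y (fun ω => g (X ω))
  have e1 : entropy p (fun ω => (X ω, g (X ω))) = entropy p X :=
    entropy_relabel hp0 Prod.fst (fun x => (x, g x)) (fun _ => rfl) (fun _ => rfl)
  have e2 : entropy p (fun ω => ((X ω, Y ω), g (X ω))) = entropy p (fun ω => (X ω, Y ω)) :=
    entropy_relabel hp0 Prod.fst (fun v => (v, g v.1)) (fun _ => rfl) (fun _ => rfl)
  have e3 : entropy p (fun ω => (Y ω, g (X ω))) = entropy p (fun ω => (g (X ω), Y ω)) :=
    entropy_swap hp0 Y (fun ω => g (X ω))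
  linarith

end helpers3
section helpers4
open scoped Classical
open Finset

variable {Ω : Type*} [Fintype Ω] {p : Ω → ℝ}

lemma entropy_subsingleton (hp1 : ∑ ω, p ω = 1) {S : Type*} [Subsingleton S] (X : Ω → S) :
    entropy p X = 0 := by
  unfold entropy
  have h1 : ∀ ω, prEq p X (X ω) = 1 := by
    intro ω
    unfold prEq
    rw [Finset.sum_congr rfl (fun ω' _ => if_pos (Subsingleton.elim _ _))]
    exact hp1
  simp [h1]

instance emptyTupleSubsingleton {ι : Type*} {S : ι → Type*} :
    Subsingleton (∀ i : {x : ι // x ∈ (∅ : Finset ι)}, S i.1) :=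
  ⟨fun a b => funext fun i => absurd i.2 (Finset.notMem_empty _)⟩

lemma entropy_tuple_insert (hp0 : ∀ ω, 0 ≤ p ω) {ι : Type*} [DecidableEq ι] {S : ι → Type*}
    (V : (i : ι) → Ω → S i) {A : Finset ι} {j : ι} (hj : j ∉ A) :
    entropy p (tupleOn V (insert j A))
      = entropy p (fun ω => (V j ω, tupleOn V A ω)) := by
  refine entropy_relabel hp0
    (fun t => (t ⟨j, Finset.mem_insert_self j A⟩,
      fun i => t ⟨i.1, Finset.mem_insert_of_mem i.2⟩))
    (fun st i => if hij : i.1 = j then cast (congrArg S hij).symm st.1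
      else st.2 ⟨i.1, (Finset.mem_insert.mp i.2).resolve_left hij⟩)
    (fun ω => rfl) ?_
  intro ω
  funext i
  dsimp only
  by_cases hij : i.1 = j
  · rw [dif_pos hij]
    rcases i with ⟨i', hi'⟩
    dsimp only at hij ⊢
    subst hij
    simp [tupleOn]
  · rw [dif_neg hij]
    rfl

lemma entropy_tuple_le (hp0 : ∀ ω, 0 ≤ p ω) (hp1 : ∑ ω, p ω = 1)
    {ι : Type*} [DecidableEq ι] {S : ι → Type*} (V : (i : ι) → Ω → S i) (A : Finset ι) :
    entropy p (tupleOn V A) ≤ ∑ i ∈ A, entropy p (V i) := by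
  induction A using Finset.induction_on with
  | empty => rw [entropy_subsingleton hp1, Finset.sum_empty]
  | insert j A hj ih =>
    rw [entropy_tuple_insert hp0 V hj, Finset.sum_insert hj]
    calc entropy p (fun ω => (V j ω, tupleOn V A ω))
        ≤ entropy p (V j) + entropy p (tupleOn V A) := entropy_pair_le hp0 hp1 _ _
      _ ≤ entropy p (V j) + ∑ i ∈ A, entropy p (V i) := by linarith
end helpers4
section helpers5
open scoped Classical
open Finset

variable {Ω : Type*} [Fintype Ω] {p : Ω → ℝ}

lemma tc_mono (hp0 : ∀ ω, 0 ≤ p ω) (hp1 : ∑ ω, p ω = 1)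
    {ι : Type*} [DecidableEq ι] {S T : ι → Type*}
    (Z : (i : ι) → Ω → S i) (f : (i : ι) → S i → T i) (A : Finset ι) :
    (∑ i ∈ A, entropy p (fun ω => f i (Z i ω)))
        - entropy p (tupleOn (fun i ω => f i (Z i ω)) A)
      ≤ (∑ i ∈ A, entropy p (Z i)) - entropy p (tupleOn Z A) := by
  induction A using Finset.induction_on with
  | empty =>
    rw [entropy_subsingleton hp1, entropy_subsingleton hp1, Finset.sum_empty, Finset.sum_empty]
  | insert j A hj ih =>
    rw [Finset.sum_insert hj, Finset.sum_insert hj,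
      entropy_tuple_insert hp0 (fun i ω => f i (Z i ω)) hj, entropy_tuple_insert hp0 Z hj]
    have S1 := dpi hp0 hp1 (Z j) (tupleOn (fun i ω => f i (Z i ω)) A) (f j)
    have S2 := dpi hp0 hp1 (tupleOn Z A) (Z j)
      (fun t i => f i.1 (t i) : (∀ i : {x // x ∈ A}, S i.1) → (∀ i : {x // x ∈ A}, T i.1))
    have r1 : entropy p (fun ω => (fun t (i : {x // x ∈ A}) => f i.1 (t i)) (tupleOn Z A ω))
        = entropy p (tupleOn (fun i ω => f i (Z i ω)) A) := rfl
    have r2 : entropy p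
          (fun ω => ((fun t (i : {x // x ∈ A}) => f i.1 (t i)) (tupleOn Z A ω), Z j ω))
        = entropy p (fun ω => (tupleOn (fun i ω => f i (Z i ω)) A ω, Z j ω)) := rfl
    have s1 : entropy p (fun ω => (tupleOn Z A ω, Z j ω))
        = entropy p (fun ω => (Z j ω, tupleOn Z A ω)) := entropy_swap hp0 _ _
    have s2 : entropy p (fun ω => (tupleOn (fun i ω => f i (Z i ω)) A ω, Z j ω))
        = entropy p (fun ω => (Z j ω, tupleOn (fun i ω => f i (Z i ω)) A ω)) :=
      entropy_swap hp0 _ _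
    linarith [ih, S1, S2, r1, r2, s1, s2]

lemma exists_subset_sum_le {ι : Type*} [DecidableEq ι] (s : Finset ι) (h : ι → ℝ) :
    ∀ k a : ℕ, a + k = s.card →
      ∃ A ∈ s.powersetCard a, (s.card : ℝ) * ∑ i ∈ A, h i ≤ (a : ℝ) * ∑ i ∈ s, h i := by
  intro k
  induction k with
  | zero =>
    intro a hA
    refine ⟨s, ?_, ?_⟩
    · rw [Finset.mem_powersetCard]
      exact ⟨le_refl s, by omega⟩
    · have : a = s.card := by omega
      rw [this]
  | succ k ihk =>
    intro a hA
    obtain ⟨A, hA1, hA2⟩ := ihk (a + 1) (by omega)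
    rw [Finset.mem_powersetCard] at hA1
    have hAne : A.Nonempty := Finset.card_pos.mp (by omega)
    obtain ⟨j, hjA, hjmax⟩ := Finset.exists_max_image A h hAne
    refine ⟨A.erase j, ?_, ?_⟩
    · rw [Finset.mem_powersetCard]
      constructor
      · exact le_trans (Finset.erase_subset j A) hA1.1
      · rw [Finset.card_erase_of_mem hjA, hA1.2]
        omega
    · rw [Finset.sum_erase_eq_sub hjA]
      have hsum_le : ∑ i ∈ A, h i ≤ ((a : ℝ) + 1) * h j := by
        have := Finset.sum_le_card_nsmul A h (h j) (fun i hi => hjmax i hi)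
        rw [hA1.2] at this
        push_cast at this
        simpa [nsmul_eq_mul] using this
      have hc : (0:ℝ) ≤ (s.card : ℝ) := Nat.cast_nonneg _
      have ha : (0:ℝ) ≤ (a : ℝ) := Nat.cast_nonneg _
      have hA2' : (s.card : ℝ) * ∑ i ∈ A, h i ≤ ((a : ℝ) + 1) * ∑ i ∈ s, h i := by
        push_cast at hA2
        linarith [hA2]
      nlinarith [mul_le_mul_of_nonneg_left hA2' ha, mul_le_mul_of_nonneg_left hsum_le hc]

end helpers5

/-- Let `Z_1, …, Z_b` be mutually independent random variables (on a
common finite probability space with pmf `p`; mutual independence is expressed by the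
entropy characterization `H(Z_{[b]}) = Σ_i H(Z_i)`) and `f_1, …, f_b` deterministic
functions on their respective ranges.  For any `a ≤ b`, the minimum of `H(f_A(Z_A))`
over all subsets `A ⊆ [b]` of size `a` is at most `(a/b) · H(f_{[b]}(Z_{[b]}))`. -/
theorem min_subset_entropy_le_of_indep
    {Ω : Type*} [Fintype Ω] {b : ℕ} {S T : Fin b → Type*}
    (p : Ω → ℝ) (hp0 : ∀ ω, 0 ≤ p ω) (hp1 : ∑ ω, p ω = 1)
    (Z : (i : Fin b) → Ω → S i) (f : (i : Fin b) → S i → T i)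
    (hindep : entropy p (tupleOn Z Finset.univ) = ∑ i, entropy p (Z i))
    (a : ℕ) (ha : a ≤ b) :
    ((Finset.univ : Finset (Fin b)).powersetCard a).inf'
        (by rw [Finset.powersetCard_nonempty]; simpa using ha)
        (fun A => entropy p (tupleOn (fun i ω => f i (Z i ω)) A))
      ≤ (a / b : ℝ) * entropy p (tupleOn (fun i ω => f i (Z i ω)) Finset.univ) := by
  have hsuper : ∑ i, entropy p (fun ω => f i (Z i ω))
      ≤ entropy p (tupleOn (fun i ω => f i (Z i ω)) Finset.univ) := by
    have h1 := tc_mono hp0 hp1 Z f Finset.univ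
    linarith [h1, hindep.le, hindep.ge]
  rcases Nat.eq_zero_or_pos a with ha0 | hapos
  · subst ha0
    have hmem : (∅ : Finset (Fin b)) ∈ (Finset.univ : Finset (Fin b)).powersetCard 0 := by simp
    refine le_trans (Finset.inf'_le _ hmem) ?_
    rw [entropy_subsingleton hp1]
    simp
  · have hb : 0 < b := lt_of_lt_of_le hapos ha
    have hbR : (0:ℝ) < (b:ℝ) := by exact_mod_cast hb
    obtain ⟨A, hA, hAsum⟩ := exists_subset_sum_le (Finset.univ : Finset (Fin b))
      (fun i => entropy p (fun ω => f i (Z i ω))) (b - a) a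
      (by rw [Finset.card_univ, Fintype.card_fin]; omega)
    refine le_trans (Finset.inf'_le _ hA) ?_
    calc entropy p (tupleOn (fun i ω => f i (Z i ω)) A)
        ≤ ∑ i ∈ A, entropy p (fun ω => f i (Z i ω)) := entropy_tuple_le hp0 hp1 _ A
      _ ≤ (a / b : ℝ) * ∑ i, entropy p (fun ω => f i (Z i ω)) := by
          rw [Finset.card_univ, Fintype.card_fin] at hAsum
          rw [div_mul_eq_mul_div, le_div_iff₀ hbR]
          linarith [hAsum]
      _ ≤ (a / b : ℝ) * entropy p (tupleOn (fun i ω => f i (Z i ω)) Finset.univ) := by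
          apply mul_le_mul_of_nonneg_left hsuper
          positivity
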